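/- For all integers n ≥ 6 and L ≥ 1, the following exact counting identities hold over M_{L,n,3}: (i) ∑_{A ∈ M_{L,n,3}} T(A) = n · C(n−1,3)^L; (ii) ∑_{A ∈ M_{L,n,3}} U(A) = L · C(n,3) · C(n−3,3)^{L−1}; (iii) ∑_{A ∈ M_{L,n,3}} V(A) = L · C(n,2) · (n−2) · (C(n−2,3)^{L−1} − C(n−3,3)^{L−1}). -/

import Mathlib

open Finset Filter

attribute [local instance] Classical.propDecidable

/-- `M_{L,n,k}`: the set of `L × n` matrices over `ZMod 2` with exactly `k`
nonzero entries in each row. -/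
noncomputable def Mset (L n k : ℕ) : Finset (Matrix (Fin L) (Fin n) (ZMod 2)) :=
  Finset.univ.filter fun A =>
    ∀ i : Fin L, (Finset.univ.filter fun j : Fin n => A i j ≠ 0).card = k

/-- `Y(A)`: the number of vectors in the kernel of the transpose of `A`. -/
noncomputable def Ycount {L n : ℕ} (A : Matrix (Fin L) (Fin n) (ZMod 2)) : ℕ :=
  Nat.card {u : Fin L → ZMod 2 // Matrix.vecMul u A = 0}

/-- `E_{L,k}(Y)`: the expectation of `Y` over a uniformly random `A ∈ M_{L,n,k}`
(there are `C(n,k)^L` such matrices). -/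
noncomputable def EY (n L k : ℕ) : ℝ :=
  (∑ A ∈ Mset L n k, (Ycount A : ℝ)) / (n.choose k : ℝ) ^ L

/-- `P_(r)`: the fraction of matrices in `M_{L,n,k}` of rank `r`. -/
noncomputable def Prank (n L k r : ℕ) : ℝ :=
  (((Mset L n k).filter fun A => A.rank = r).card : ℝ) / (n.choose k : ℝ) ^ L

/-- The weight of column `j` of `A`: the number of nonzero entries of the column
(over `ZMod 2` this is the column sum computed in `ℕ`). -/
def colW {L n : ℕ} (A : Matrix (Fin L) (Fin n) (ZMod 2)) (j : Fin n) : ℕ :=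
  (Finset.univ.filter fun i : Fin L => A i j ≠ 0).card

/-- The `3`-weight of row `i` of `A`: the multiset of the column weights of the
columns in the support of row `i`. -/
def rowW {L n : ℕ} (A : Matrix (Fin L) (Fin n) (ZMod 2)) (i : Fin L) : Multiset ℕ :=
  (Finset.univ.filter fun j : Fin n => A i j ≠ 0).val.map (colW A)

/-- `T(A)`: the number of all-zero columns of `A`. -/
def Tcount {L n : ℕ} (A : Matrix (Fin L) (Fin n) (ZMod 2)) : ℕ :=
  (Finset.univ.filter fun j : Fin n => ∀ i : Fin L, A i j = 0).card

/-- `U(A)`: the number of rows whose `3`-weight is `{1,1,1}`. -/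
def Ucount {L n : ℕ} (A : Matrix (Fin L) (Fin n) (ZMod 2)) : ℕ :=
  (Finset.univ.filter fun i : Fin L => rowW A i = ({1, 1, 1} : Multiset ℕ)).card

/-- `V(A)`: the number of rows whose `3`-weight is `{1,1,α}` with `α ≥ 2`. -/
noncomputable def Vcount {L n : ℕ} (A : Matrix (Fin L) (Fin n) (ZMod 2)) : ℕ :=
  (Finset.univ.filter fun i : Fin L =>
    ∃ a : ℕ, 2 ≤ a ∧ rowW A i = ({1, 1, a} : Multiset ℕ)).card

section Aux
variable {L n : ℕ}

variable {L n : ℕ}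

def toF (A : Matrix (Fin L) (Fin n) (ZMod 2)) : Fin L → Finset (Fin n) :=
  fun i => Finset.univ.filter fun j => A i j ≠ 0

noncomputable def ofF (f : Fin L → Finset (Fin n)) : Matrix (Fin L) (Fin n) (ZMod 2) :=
  fun i j => if j ∈ f i then 1 else 0

def Ff (L n : ℕ) : Finset (Fin L → Finset (Fin n)) :=
  Fintype.piFinset fun _ => (Finset.univ : Finset (Fin n)).powersetCard 3

def Wf (f : Fin L → Finset (Fin n)) (j : Fin n) : ℕ :=
  (Finset.univ.filter fun i => j ∈ f i).card

lemma mem_Ff {f : Fin L → Finset (Fin n)} : f ∈ Ff L n ↔ ∀ i, (f i).card = 3 := by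
  simp [Ff, Fintype.mem_piFinset, Finset.mem_powersetCard, Finset.subset_univ]

lemma mem_Mset {A : Matrix (Fin L) (Fin n) (ZMod 2)} :
    A ∈ Mset L n 3 ↔ ∀ i : Fin L, (Finset.univ.filter fun j : Fin n => A i j ≠ 0).card = 3 := by
  simp [Mset]

lemma zmod2_ne (a : ZMod 2) : a ≠ 0 ↔ a = 1 := by revert a; decide

lemma sum_transfer (g : Matrix (Fin L) (Fin n) (ZMod 2) → ℤ)
    (g' : (Fin L → Finset (Fin n)) → ℤ)
    (h : ∀ A ∈ Mset L n 3, g A = g' (toF A)) :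
    ∑ A ∈ Mset L n 3, g A = ∑ f ∈ Ff L n, g' f := by
  refine Finset.sum_nbij' (i := toF) (j := ofF) ?_ ?_ ?_ ?_ h
  · intro A hA
    rw [mem_Ff]; intro i; exact (mem_Mset.mp hA) i
  · intro f hf
    rw [mem_Mset]; intro i
    have : (Finset.univ.filter fun j : Fin n => ofF f i j ≠ 0) = f i := by
      ext j; simp [ofF]
    rw [this]; exact mem_Ff.mp hf i
  · intro A hA
    funext i j
    by_cases hj : A i j = 0 <;> simp [ofF, toF, hj]
    exact ((zmod2_ne _).mp hj).symm
  · intro f hf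
    funext i; ext j; simp [ofF, toF]



lemma multiset_111 {α : Type*} (S : Finset α) (w : α → ℕ) (h3 : S.card = 3) :
    S.val.map w = ({1,1,1} : Multiset ℕ) ↔ ∀ j ∈ S, w j = 1 := by
  have h : ({1,1,1} : Multiset ℕ) = Multiset.replicate 3 1 := rfl
  rw [h, Multiset.eq_replicate]
  constructor
  · rintro ⟨-, h2⟩ j hj
    exact h2 _ (Multiset.mem_map.mpr ⟨j, Finset.mem_val.mpr hj, rfl⟩)
  · intro h1
    refine ⟨by rw [Multiset.card_map]; exact h3, ?_⟩
    rintro b hb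
    obtain ⟨j, hj, rfl⟩ := Multiset.mem_map.mp hb
    exact h1 j hj

lemma cons_112 (a : ℕ) : a ::ₘ Multiset.replicate 2 1 = ({1,1,a} : Multiset ℕ) := by
  show a ::ₘ 1 ::ₘ 1 ::ₘ 0 = 1 ::ₘ 1 ::ₘ a ::ₘ 0
  rw [Multiset.cons_swap a 1, Multiset.cons_swap a 1]

lemma multiset_11a {α : Type*} [DecidableEq α] (S : Finset α) (w : α → ℕ)
    (h3 : S.card = 3) (hpos : ∀ j ∈ S, 1 ≤ w j) :
    (∃ a, 2 ≤ a ∧ S.val.map w = ({1,1,a} : Multiset ℕ)) ↔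
      (S.filter fun j => w j = 1).card = 2 := by
  constructor
  · rintro ⟨a, ha, hm⟩
    have hane : ¬ (1 = a) := by omega
    have hc : Multiset.count 1 (S.val.map w) = 2 := by
      rw [hm]; show Multiset.count 1 (1 ::ₘ 1 ::ₘ a ::ₘ 0) = 2
      simp [Multiset.count_cons, hane]
    rw [Multiset.count_map] at hc
    have : (S.val.filter fun j => 1 = w j) = (S.val.filter fun j => w j = 1) := by
      apply Multiset.filter_congr; intro x _; constructor <;> (intro h; omega)
    rw [this] at hc
    simpa [Finset.card, Finset.filter] using hc
  · intro h2
    have hsplit := Finset.card_filter_add_card_filter_not (s := S)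
      (p := fun j => w j = 1)
    have h1 : (S.filter fun j => ¬ w j = 1).card = 1 := by omega
    obtain ⟨j, hj⟩ := Finset.card_eq_one.mp h1
    have hjm : j ∈ S.filter fun j => ¬ w j = 1 := by rw [hj]; exact Finset.mem_singleton_self j
    rw [Finset.mem_filter] at hjm
    have hw2 : 2 ≤ w j := by have := hpos j hjm.1; omega
    refine ⟨w j, hw2, ?_⟩
    have hv : S.val = j ::ₘ (S.erase j).val := by
      rw [Finset.erase_val]
      exact (Multiset.cons_erase (Finset.mem_val.mpr hjm.1)).symm
    rw [hv, Multiset.map_cons]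
    have hall : (S.erase j).val.map w = Multiset.replicate 2 1 := by
      rw [Multiset.eq_replicate]
      constructor
      · rw [Multiset.card_map]
        show (S.erase j).card = 2
        rw [Finset.card_erase_of_mem hjm.1, h3]
      · rintro b hb
        obtain ⟨k, hk, rfl⟩ := Multiset.mem_map.mp hb
        rw [Finset.mem_val] at hk
        by_contra hne
        have : k ∈ S.filter fun j => ¬ w j = 1 :=
          Finset.mem_filter.mpr ⟨Finset.mem_of_mem_erase hk, hne⟩
        rw [hj, Finset.mem_singleton] at this
        exact (Finset.ne_of_mem_erase hk) this
    rw [hall, cons_112]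

lemma Wf_pos {f : Fin L → Finset (Fin n)} {i : Fin L} {j : Fin n} (h : j ∈ f i) :
    1 ≤ Wf f j :=
  Finset.card_pos.mpr ⟨i, Finset.mem_filter.mpr ⟨Finset.mem_univ _, h⟩⟩

lemma Wf_eq_one {f : Fin L → Finset (Fin n)} {i : Fin L} {j : Fin n} (h : j ∈ f i) :
    Wf f j = 1 ↔ ∀ r, r ≠ i → j ∉ f r := by
  unfold Wf
  rw [Finset.card_eq_one]
  constructor
  · rintro ⟨x, hx⟩ r hr hjr
    have hi : i ∈ ({x} : Finset (Fin L)) := by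
      rw [← hx]; exact Finset.mem_filter.mpr ⟨Finset.mem_univ _, h⟩
    have hr' : r ∈ ({x} : Finset (Fin L)) := by
      rw [← hx]; exact Finset.mem_filter.mpr ⟨Finset.mem_univ _, hjr⟩
    rw [Finset.mem_singleton] at hi hr'
    exact hr (hr'.trans hi.symm)
  · intro h'
    refine ⟨i, ?_⟩
    ext r
    simp only [Finset.mem_filter, Finset.mem_univ, true_and, Finset.mem_singleton]
    constructor
    · intro hjr; by_contra hne; exact h' r hne hjr
    · rintro rfl; exact h

/-- generic sum swap -/
lemma sum_card_filter {β : Type*} [Fintype β] (s : Finset (Fin L → Finset (Fin n)))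
    (p : (Fin L → Finset (Fin n)) → β → Prop) :
    ∑ f ∈ s, ((Finset.univ.filter (p f)).card : ℤ)
      = ∑ x : β, ((s.filter fun f => p f x).card : ℤ) := by
  simp only [Finset.card_filter]
  push_cast
  rw [Finset.sum_comm]

/-- product over `Fin L` of an ite -/
lemma prod_ite_card (i : Fin L) (a c : ℕ) :
    (∏ r : Fin L, if r = i then a else c) = a * c ^ (L - 1) := by
  rw [← Finset.mul_prod_erase Finset.univ _ (Finset.mem_univ i), if_pos rfl]
  congr 1
  rw [Finset.prod_congr rfl (fun r hr => if_neg (Finset.ne_of_mem_erase hr)),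
    Finset.prod_const, Finset.card_erase_of_mem (Finset.mem_univ i), Finset.card_univ,
    Fintype.card_fin]

/-- The key counting lemma. -/
lemma card_pi_fix (i : Fin L) (S : Finset (Fin n)) (hS : S.card = 3) (t : Finset (Fin n)) :
    (((Ff L n)).filter fun f => f i = S ∧ ∀ r, r ≠ i → f r ⊆ tᶜ).card
      = ((n - t.card).choose 3) ^ (L - 1) := by
  have hset : ((Ff L n)).filter (fun f => f i = S ∧ ∀ r, r ≠ i → f r ⊆ tᶜ)
      = Fintype.piFinset (fun r => if r = i then {S} else (tᶜ).powersetCard 3) := by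
    ext f
    simp only [Ff, Finset.mem_filter, Fintype.mem_piFinset, Finset.mem_powersetCard,
      Finset.subset_univ, true_and, Finset.mem_singleton]
    constructor
    · rintro ⟨hmem, hfi, hsub⟩ r
      by_cases hr : r = i
      · subst hr; simp [hfi]
      · simp only [hr, if_neg, ite_false, Finset.mem_powersetCard]
        exact ⟨hsub r hr, hmem r⟩
    · intro h
      have hfi : f i = S := by have := h i; simpa using this
      refine ⟨fun r => ?_, hfi, fun r hr => ?_⟩
      · by_cases hri : r = i
        · subst hri; rw [hfi, hS]
        · have := h r; rw [if_neg hri, Finset.mem_powersetCard] at this; exact this.2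
      · have := h r; rw [if_neg hr, Finset.mem_powersetCard] at this; exact this.1
  rw [hset, Fintype.card_piFinset]
  have : ∀ r : Fin L, (if r = i then ({S} : Finset (Finset (Fin n))) else (tᶜ).powersetCard 3).card
      = if r = i then 1 else (n - t.card).choose 3 := by
    intro r
    by_cases hr : r = i <;>
      simp [hr, Finset.card_powersetCard, Finset.card_compl, Fintype.card_fin]
  rw [Finset.prod_congr rfl (fun r _ => this r), prod_ite_card, one_mul]

lemma card_pi_all (t : Finset (Fin n)) :
    (((Ff L n)).filter fun f => ∀ r, f r ⊆ tᶜ).card = ((n - t.card).choose 3) ^ L := by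
  have hset : ((Ff L n)).filter (fun f => ∀ r, f r ⊆ tᶜ)
      = Fintype.piFinset (fun _ => (tᶜ).powersetCard 3) := by
    ext f
    simp only [Ff, Finset.mem_filter, Fintype.mem_piFinset, Finset.mem_powersetCard,
      Finset.subset_univ, true_and]
    constructor
    · rintro ⟨hmem, hsub⟩ r; exact ⟨hsub r, hmem r⟩
    · intro h; exact ⟨fun r => (h r).2, fun r => (h r).1⟩
  rw [hset, Fintype.card_piFinset]
  simp [Finset.card_powersetCard, Finset.card_compl, Fintype.card_fin]

lemma subset_compl_singleton {s : Finset (Fin n)} {a : Fin n} : s ⊆ {a}ᶜ ↔ a ∉ s := by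
  rw [Finset.subset_compl_comm]; simp

lemma card_fiber (P : (Fin L → Finset (Fin n)) → Prop) (i : Fin L) :
    ((Ff L n).filter P).card
      = ∑ S ∈ (Finset.univ : Finset (Fin n)).powersetCard 3,
          ((Ff L n).filter fun f => P f ∧ f i = S).card := by
  rw [Finset.card_eq_sum_card_fiberwise
    (f := fun f => f i) (t := (Finset.univ : Finset (Fin n)).powersetCard 3) ?_]
  · refine Finset.sum_congr rfl fun S _ => ?_
    rw [Finset.filter_filter]
  · intro f hf
    rw [Finset.mem_coe, Finset.mem_filter] at hf
    exact Finset.mem_powersetCard.mpr ⟨Finset.subset_univ _, mem_Ff.mp hf.1 i⟩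

lemma U_inner (i : Fin L) (S : Finset (Fin n)) (hS : S.card = 3) :
    ((Ff L n).filter fun f => (∀ j ∈ f i, Wf f j = 1) ∧ f i = S).card
      = ((n - 3).choose 3) ^ (L - 1) := by
  have heq : ((Ff L n).filter fun f => (∀ j ∈ f i, Wf f j = 1) ∧ f i = S)
      = ((Ff L n).filter fun f => f i = S ∧ ∀ r, r ≠ i → f r ⊆ Sᶜ) := by
    apply Finset.filter_congr
    intro f _
    constructor
    · rintro ⟨h1, h2⟩
      refine ⟨h2, fun r hr x hx => ?_⟩
      rw [Finset.mem_compl]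
      intro hxS
      have hxf : x ∈ f i := h2 ▸ hxS
      exact ((Wf_eq_one hxf).mp (h1 x hxf)) r hr hx
    · rintro ⟨h2, h1⟩
      refine ⟨fun j hj => ?_, h2⟩
      refine (Wf_eq_one hj).mpr fun r hr hjr => ?_
      have : j ∈ Sᶜ := h1 r hr hjr
      rw [Finset.mem_compl] at this
      exact this (h2 ▸ hj)
  rw [heq, card_pi_fix i S hS S, hS]

lemma V_inner (i : Fin L) (S : Finset (Fin n)) (hS : S.card = 3) :
    ((Ff L n).filter fun f => ((f i).filter fun j => Wf f j = 1).card = 2 ∧ f i = S).card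
      = 3 * (((n - 2).choose 3) ^ (L - 1) - ((n - 3).choose 3) ^ (L - 1)) := by
  classical
  set Q : Fin n → (Fin L → Finset (Fin n)) → Prop := fun j f =>
    f i = S ∧ ¬ Wf f j = 1 ∧ ∀ k ∈ S.erase j, Wf f k = 1 with hQ
  have heq : ((Ff L n).filter fun f => ((f i).filter fun j => Wf f j = 1).card = 2 ∧ f i = S)
      = S.biUnion fun j => (Ff L n).filter (Q j) := by
    ext f
    simp only [Finset.mem_filter, Finset.mem_biUnion, hQ]
    constructor
    · rintro ⟨hf, h2, hfi⟩
      rw [hfi] at h2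
      have hsplit := Finset.card_filter_add_card_filter_not (s := S)
        (p := fun j => Wf f j = 1)
      rw [h2, hS] at hsplit
      have h1 : (S.filter fun j => ¬ Wf f j = 1).card = 1 := by omega
      obtain ⟨j, hj⟩ := Finset.card_eq_one.mp h1
      have hjm : j ∈ S.filter fun j => ¬ Wf f j = 1 := by
        rw [hj]; exact Finset.mem_singleton_self j
      rw [Finset.mem_filter] at hjm
      refine ⟨j, hjm.1, hf, hfi, hjm.2, fun k hk => ?_⟩
      by_contra hne
      have : k ∈ S.filter fun j => ¬ Wf f j = 1 :=
        Finset.mem_filter.mpr ⟨Finset.mem_of_mem_erase hk, hne⟩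
      rw [hj, Finset.mem_singleton] at this
      exact (Finset.ne_of_mem_erase hk) this
    · rintro ⟨j, hjS, hf, hfi, hj1, hall⟩
      refine ⟨hf, ?_, hfi⟩
      rw [hfi]
      have : S.filter (fun k => Wf f k = 1) = S.erase j := by
        ext k
        simp only [Finset.mem_filter, Finset.mem_erase]
        constructor
        · rintro ⟨hkS, hk1⟩
          refine ⟨fun hkj => hj1 (hkj ▸ hk1), hkS⟩
        · rintro ⟨hkj, hkS⟩
          exact ⟨hkS, hall k (Finset.mem_erase.mpr ⟨hkj, hkS⟩)⟩
      rw [this, Finset.card_erase_of_mem hjS, hS]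
  rw [heq, Finset.card_biUnion]
  · have hcard : ∀ j ∈ S, ((Ff L n).filter (Q j)).card
        = ((n - 2).choose 3) ^ (L - 1) - ((n - 3).choose 3) ^ (L - 1) := by
      intro j hjS
      have hBC : (Ff L n).filter (Q j)
          = ((Ff L n).filter fun f => f i = S ∧ ∀ r, r ≠ i → f r ⊆ (S.erase j)ᶜ)
            \ ((Ff L n).filter fun f => f i = S ∧ ∀ r, r ≠ i → f r ⊆ Sᶜ) := by
        ext f
        simp only [Finset.mem_sdiff, Finset.mem_filter, hQ]
        constructor
        · rintro ⟨hf, hfi, hj1, hall⟩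
          have hA : ∀ r, r ≠ i → f r ⊆ (S.erase j)ᶜ := by
            intro r hr x hx
            rw [Finset.mem_compl]
            intro hxe
            have hx1 := hall x hxe
            have hxS := Finset.mem_of_mem_erase hxe
            exact ((Wf_eq_one (hfi ▸ hxS : x ∈ f i)).mp hx1) r hr hx
          refine ⟨⟨hf, hfi, hA⟩, ?_⟩
          rintro ⟨-, -, hC⟩
          apply hj1
          refine (Wf_eq_one (hfi ▸ hjS : j ∈ f i)).mpr fun r hr hjr => ?_
          have := hC r hr hjr
          rw [Finset.mem_compl] at this
          exact this hjS
        · rintro ⟨⟨hf, hfi, hA⟩, hnC⟩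
          refine ⟨hf, hfi, ?_, ?_⟩
          · intro hj1
            apply hnC
            refine ⟨hf, hfi, fun r hr x hx => ?_⟩
            rw [Finset.mem_compl]
            intro hxS
            have hxj : x = j := by
              have := hA r hr hx
              rw [Finset.mem_compl, Finset.mem_erase] at this
              by_contra hne
              exact this ⟨hne, hxS⟩
            subst hxj
            exact ((Wf_eq_one (hfi ▸ hjS : x ∈ f i)).mp hj1) r hr hx
          · intro k hk
            refine (Wf_eq_one (hfi ▸ Finset.mem_of_mem_erase hk : k ∈ f i)).mpr
              fun r hr hkr => ?_
            have := hA r hr hkr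
            rw [Finset.mem_compl] at this
            exact this hk
      rw [hBC, Finset.card_sdiff_of_subset]
      · rw [card_pi_fix i S hS (S.erase j), card_pi_fix i S hS S,
          Finset.card_erase_of_mem hjS, hS]
      · intro f hf
        rw [Finset.mem_filter] at hf ⊢
        refine ⟨hf.1, hf.2.1, fun r hr => (hf.2.2 r hr).trans ?_⟩
        exact Finset.compl_subset_compl.mpr (Finset.erase_subset j S)
    rw [Finset.sum_congr rfl hcard, Finset.sum_const, hS, smul_eq_mul]
  · intro a _ b hb hab
    simp only [Finset.disjoint_left, Finset.mem_filter, hQ]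
    rintro f ⟨hf, hfi, ha1, halla⟩ ⟨-, -, hb1, hallb⟩
    exact hb1 (halla b (Finset.mem_erase.mpr ⟨Ne.symm hab, hb⟩))


/-- instance-independent filtered-count -/
noncomputable def cnt {α : Type*} (s : Finset α) (p : α → Prop) : ℕ :=
  (@Finset.filter _ p (Classical.decPred p) s).card

lemma cnt_eq {α : Type*} (s : Finset α) (p : α → Prop) [h : DecidablePred p] :
    (s.filter p).card = cnt s p :=
  congrArg (fun h' => (@Finset.filter _ p h' s).card) (Subsingleton.elim h _)

lemma cnt_congr {α : Type*} {s : Finset α} {p q : α → Prop} (h : ∀ a ∈ s, p a ↔ q a) :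
    cnt s p = cnt s q :=
  congrArg Finset.card (Finset.filter_congr h)

lemma sum_cnt {β : Type*} [Fintype β] (s : Finset (Fin L → Finset (Fin n)))
    (p : (Fin L → Finset (Fin n)) → β → Prop) :
    ∑ f ∈ s, (cnt Finset.univ (p f) : ℤ) = ∑ x : β, (cnt s (fun f => p f x) : ℤ) := by
  simp only [← cnt_eq]
  convert sum_card_filter s p using 3 <;> congr!

lemma card_pi_all' (t : Finset (Fin n)) :
    cnt (Ff L n) (fun f => ∀ r, f r ⊆ tᶜ) = ((n - t.card).choose 3) ^ L := by
  rw [← cnt_eq]; convert card_pi_all t using 2 <;> congr!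

lemma card_fiber' (P : (Fin L → Finset (Fin n)) → Prop) (i : Fin L) :
    cnt (Ff L n) P
      = ∑ S ∈ (Finset.univ : Finset (Fin n)).powersetCard 3,
          cnt (Ff L n) (fun f => P f ∧ f i = S) := by
  simp only [← cnt_eq]
  convert card_fiber P i using 3 <;> congr!

lemma U_inner' (i : Fin L) (S : Finset (Fin n)) (hS : S.card = 3) :
    cnt (Ff L n) (fun f => (∀ j ∈ f i, Wf f j = 1) ∧ f i = S)
      = ((n - 3).choose 3) ^ (L - 1) := by
  rw [← cnt_eq]; convert U_inner i S hS using 2 <;> congr!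

lemma V_inner' (i : Fin L) (S : Finset (Fin n)) (hS : S.card = 3) :
    cnt (Ff L n) (fun f => cnt (f i) (fun j => Wf f j = 1) = 2 ∧ f i = S)
      = 3 * (((n - 2).choose 3) ^ (L - 1) - ((n - 3).choose 3) ^ (L - 1)) := by
  rw [cnt_congr (q := fun f => ((f i).filter fun j => Wf f j = 1).card = 2 ∧ f i = S)
    (fun f _ => by simp only [cnt_eq])]
  rw [← cnt_eq]; convert V_inner i S hS using 2 <;> congr!

end Aux

lemma colW_eq {L n : ℕ} (A : Matrix (Fin L) (Fin n) (ZMod 2)) : colW A = Wf (toF A) := by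
  funext j
  unfold colW Wf
  congr 1
  apply Finset.filter_congr
  intro i _
  simp [toF]

/-- Exact first-moment identities for `T`, `U`, `V` over `M_{L,n,3}`. -/
theorem sum_TUV_eq (n L : ℕ) (hn : 6 ≤ n) (hL : 1 ≤ L) :
    (∑ A ∈ Mset L n 3, (Tcount A : ℤ)) = (n : ℤ) * ((n - 1).choose 3 : ℤ) ^ L ∧
    (∑ A ∈ Mset L n 3, (Ucount A : ℤ)) =
      (L : ℤ) * (n.choose 3 : ℤ) * ((n - 3).choose 3 : ℤ) ^ (L - 1) ∧
    (∑ A ∈ Mset L n 3, (Vcount A : ℤ)) =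
      (L : ℤ) * (n.choose 2 : ℤ) * ((n : ℤ) - 2) *
        (((n - 2).choose 3 : ℤ) ^ (L - 1) - ((n - 3).choose 3 : ℤ) ^ (L - 1)) := by
  refine ⟨?_, ?_, ?_⟩
  · -- T
    have h1 : ∑ A ∈ Mset L n 3, (Tcount A : ℤ)
        = ∑ f ∈ Ff L n, (cnt Finset.univ (fun j : Fin n => ∀ i, j ∉ f i) : ℤ) := by
      apply sum_transfer
      intro A hA
      congr 1
      unfold Tcount
      rw [cnt_eq]
      exact cnt_congr fun j _ => by simp [toF]
    refine h1.trans ((sum_cnt (Ff L n) (fun f (j : Fin n) => ∀ i, j ∉ f i)).trans ?_)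
    have h2 : ∀ j : Fin n, cnt (Ff L n) (fun f => ∀ i, j ∉ f i)
        = ((n - 1).choose 3) ^ L := by
      intro j
      rw [cnt_congr (q := fun f => ∀ r, f r ⊆ ({j} : Finset (Fin n))ᶜ)
        (fun f _ => by simp only [subset_compl_singleton])]
      rw [card_pi_all']
      simp
    rw [Finset.sum_congr rfl fun j _ => congrArg _ (h2 j)]
    simp only [Finset.sum_const, Finset.card_univ, Fintype.card_fin, nsmul_eq_mul]
    push_cast
    ring
  · -- U
    have h1 : ∑ A ∈ Mset L n 3, (Ucount A : ℤ)
        = ∑ f ∈ Ff L n, (cnt Finset.univ (fun i : Fin L => ∀ j ∈ f i, Wf f j = 1) : ℤ) := by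
      apply sum_transfer
      intro A hA
      congr 1
      unfold Ucount
      rw [cnt_eq]
      refine cnt_congr fun i _ => ?_
      have hS : (toF A i).card = 3 := mem_Mset.mp hA i
      have hrw : rowW A i = (toF A i).val.map (colW A) := rfl
      rw [hrw, colW_eq, multiset_111 _ _ hS]
    refine h1.trans ((sum_cnt (Ff L n)
      (fun f (i : Fin L) => ∀ j ∈ f i, Wf f j = 1)).trans ?_)
    have h2 : ∀ i : Fin L, cnt (Ff L n) (fun f => ∀ j ∈ f i, Wf f j = 1)
        = n.choose 3 * ((n - 3).choose 3) ^ (L - 1) := by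
      intro i
      rw [card_fiber' _ i,
        Finset.sum_congr rfl (fun S hS => U_inner' i S (Finset.mem_powersetCard.mp hS).2),
        Finset.sum_const, Finset.card_powersetCard, Finset.card_univ, Fintype.card_fin,
        smul_eq_mul]
    rw [Finset.sum_congr rfl fun i _ => congrArg _ (h2 i)]
    simp only [Finset.sum_const, Finset.card_univ, Fintype.card_fin, nsmul_eq_mul]
    push_cast
    ring
  · -- V
    have h1 : ∑ A ∈ Mset L n 3, (Vcount A : ℤ)
        = ∑ f ∈ Ff L n,
            (cnt Finset.univ (fun i : Fin L => cnt (f i) (fun j => Wf f j = 1) = 2) : ℤ) := by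
      apply sum_transfer
      intro A hA
      congr 1
      unfold Vcount
      rw [cnt_eq]
      refine cnt_congr fun i _ => ?_
      have hS : (toF A i).card = 3 := mem_Mset.mp hA i
      have hpos : ∀ j ∈ toF A i, 1 ≤ Wf (toF A) j := fun j hj => Wf_pos hj
      have hrw : rowW A i = (toF A i).val.map (colW A) := rfl
      rw [hrw, colW_eq, multiset_11a _ _ hS hpos]
      simp only [cnt_eq]
    refine h1.trans ((sum_cnt (Ff L n)
      (fun f (i : Fin L) => cnt (f i) (fun j => Wf f j = 1) = 2)).trans ?_)
    have hbc : ((n - 3).choose 3) ^ (L - 1) ≤ ((n - 2).choose 3) ^ (L - 1) :=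
      Nat.pow_le_pow_left (Nat.choose_le_choose 3 (Nat.sub_le_sub_left (by norm_num) n)) _
    have h2 : ∀ i : Fin L, cnt (Ff L n) (fun f => cnt (f i) (fun j => Wf f j = 1) = 2)
        = n.choose 3 * (3 * (((n - 2).choose 3) ^ (L - 1) - ((n - 3).choose 3) ^ (L - 1))) := by
      intro i
      rw [card_fiber' _ i,
        Finset.sum_congr rfl (fun S hS => V_inner' i S (Finset.mem_powersetCard.mp hS).2),
        Finset.sum_const, Finset.card_powersetCard, Finset.card_univ, Fintype.card_fin,
        smul_eq_mul]
    rw [Finset.sum_congr rfl fun i _ => congrArg _ (h2 i)]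
    have hch : (n.choose 3 : ℤ) * 3 = (n.choose 2 : ℤ) * ((n : ℤ) - 2) := by
      have h2le : 2 ≤ n := le_trans (by norm_num) hn
      have h2n : ((n : ℤ) - 2) = ((n - 2 : ℕ) : ℤ) := by
        rw [Nat.cast_sub h2le]
        norm_num
      rw [h2n]
      exact_mod_cast Nat.choose_succ_right_eq n 2
    simp only [Finset.sum_const, Finset.card_univ, Fintype.card_fin, nsmul_eq_mul]
    push_cast [Nat.cast_sub hbc]
    linear_combination ((L : ℤ) *
      (((n - 2).choose 3 : ℤ) ^ (L - 1) - ((n - 3).choose 3 : ℤ) ^ (L - 1))) * hch
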